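/- Setting x=y=z in SC(x,y,z) = 64x³y³z³/((1-x-y)(1-x-z)(1-y-z)(1-x)²(1-y)²(1-z)²) gives SC(x) = 64x⁹/((1-2x)³(1-x)⁶), and the coefficient of x^{n+2} in SC(x) equals sc(n) where sc(n-2) = 2^{n+2}(n² - 27n + 194) - 8(n⁵/15 + 11n³/3 + 12n² + 844n/15 + 96). -/

import Mathlib

open PowerSeries

/-- The one-variable skew-cross generating function (`x=y=z` in `SC(x,y,z)`). -/
noncomputable def SC1 : PowerSeries ℚ :=
  64 * X ^ 9 * ((1 - 2 * X) ^ 3 * (1 - X) ^ 6)⁻¹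

/-- Closed form for the coefficients of `1/((1-2x)³(1-x)⁶)`. -/
noncomputable def scg (n : ℕ) : ℚ :=
  2 ^ n * (32 * ((n : ℚ) ^ 2 - 9 * n + 32)) -
    (1023 + 25127 * (n : ℚ) / 60 + 597 * (n : ℚ) ^ 2 / 8 + 173 * (n : ℚ) ^ 3 / 24 +
      3 * (n : ℚ) ^ 4 / 8 + (n : ℚ) ^ 5 / 120)

lemma scg_key :
    (PowerSeries.mk scg) * ((1 - 2 * X) ^ 3 * (1 - X) ^ 6 : PowerSeries ℚ) = 1 := by
  have hD : ((1 - 2 * X) ^ 3 * (1 - X) ^ 6 : PowerSeries ℚ) =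
      1 - C 12 * X + C 63 * X ^ 2 - C 190 * X ^ 3 + C 363 * X ^ 4 -
        C 456 * X ^ 5 + C 377 * X ^ 6 - C 198 * X ^ 7 + C 60 * X ^ 8 -
        C 8 * X ^ 9 := by
    simp only [map_ofNat]
    ring
  rw [hD]
  have hexp : (PowerSeries.mk scg) *
      (1 - C 12 * X + C 63 * X ^ 2 - C 190 * X ^ 3 + C 363 * X ^ 4 -
        C 456 * X ^ 5 + C 377 * X ^ 6 - C 198 * X ^ 7 + C 60 * X ^ 8 -
        C 8 * X ^ 9) =
      (PowerSeries.mk scg)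
        - (C 12 * PowerSeries.mk scg) * X ^ 1
        + (C 63 * PowerSeries.mk scg) * X ^ 2
        - (C 190 * PowerSeries.mk scg) * X ^ 3
        + (C 363 * PowerSeries.mk scg) * X ^ 4
        - (C 456 * PowerSeries.mk scg) * X ^ 5
        + (C 377 * PowerSeries.mk scg) * X ^ 6
        - (C 198 * PowerSeries.mk scg) * X ^ 7
        + (C 60 * PowerSeries.mk scg) * X ^ 8
        - (C 8 * PowerSeries.mk scg) * X ^ 9 := by ring
  rw [hexp]
  ext n
  simp only [map_sub, map_add, coeff_mul_X_pow', coeff_C_mul, coeff_mk, coeff_one]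
  rcases lt_or_ge n 9 with h | h
  · interval_cases n <;> norm_num [scg]
  · obtain ⟨m, rfl⟩ := Nat.exists_eq_add_of_le h
    have h1 : 9 + m - 1 = m + 8 := by omega
    have h2 : 9 + m - 2 = m + 7 := by omega
    have h3 : 9 + m - 3 = m + 6 := by omega
    have h4 : 9 + m - 4 = m + 5 := by omega
    have h5 : 9 + m - 5 = m + 4 := by omega
    have h6 : 9 + m - 6 = m + 3 := by omega
    have h7 : 9 + m - 7 = m + 2 := by omega
    have h8 : 9 + m - 8 = m + 1 := by omega
    have h9 : 9 + m - 9 = m := by omega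
    have h0 : 9 + m = m + 9 := by omega
    rw [if_pos (by omega), if_pos (by omega), if_pos (by omega), if_pos (by omega),
      if_pos (by omega), if_pos (by omega), if_pos (by omega), if_pos (by omega),
      if_pos (by omega), if_neg (by omega), h1, h2, h3, h4, h5, h6, h7, h8, h9, h0]
    simp only [scg, pow_add, Nat.cast_add]
    push_cast
    ring

theorem skew_cross_volume_count (n : ℕ) (hn : 9 ≤ n) :
    PowerSeries.coeff n SC1 =
      2 ^ (n + 2) * ((n : ℚ) ^ 2 - 27 * n + 194) -
        8 * ((n : ℚ) ^ 5 / 15 + 11 * (n : ℚ) ^ 3 / 3 + 12 * (n : ℚ) ^ 2 +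
          844 * (n : ℚ) / 15 + 96) := by
  have hc : constantCoeff (((1 - 2 * X) ^ 3 * (1 - X) ^ 6 : PowerSeries ℚ)) ≠ 0 := by
    simp
  have hinv : (((1 - 2 * X) ^ 3 * (1 - X) ^ 6 : PowerSeries ℚ))⁻¹ = PowerSeries.mk scg :=
    (PowerSeries.inv_eq_iff_mul_eq_one hc).2 scg_key
  have hSC : SC1 = (C 64 * PowerSeries.mk scg) * X ^ 9 := by
    rw [SC1, hinv]
    simp only [map_ofNat]
    ring
  rw [hSC, coeff_mul_X_pow', if_pos hn, coeff_C_mul, coeff_mk]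
  obtain ⟨m, rfl⟩ := Nat.exists_eq_add_of_le hn
  have h9 : 9 + m - 9 = m := by omega
  have h0 : 9 + m = m + 9 := by omega
  rw [h9, h0]
  simp only [scg, pow_add, Nat.cast_add]
  push_cast
  ring
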